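/- arXiv:2010.03729 — 2 statements merged into one kernel-verified Lean document; each statement's English description precedes it below -/
import Mathlib

section
/- Let d ≥ 1 and λ > 0, and let ν_λ be the probability measure on ℝᵈ × ℝᵈ with density (u, v) ↦ (2π)^{−d} 3^{−d/2} λ^{−d} exp(−(‖u‖² − ⟨u, v⟩ + ‖v‖²)/(3λ)) with respect to Lebesgue measure. Then for every bounded measurable φ : ℝ → ℝ, one has ∫ φ(‖u‖) φ(‖v‖) dν_λ(u, v) ≥ 0. -/
open MeasureTheory
open scoped RealInnerProductSpace

open Real
open scoped ENNReal NNReal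

noncomputable section
namespace S7Aux

variable {d : ℕ} {l : ℝ}

local notation "E" => EuclideanSpace ℝ (Fin d)

lemma integrable_gauss {b : ℝ} (hb : 0 < b) :
    Integrable (fun x : E => rexp (-(b * ‖x‖ ^ 2))) := by
  have h := (GaussianFourier.integrable_cexp_neg_mul_sq_norm_add (V := E)
      (b := (b : ℂ)) (by simpa using hb) 0 0).norm
  refine h.congr (Filter.Eventually.of_forall fun x => ?_)
  simp [Complex.norm_exp, neg_mul, ← Complex.ofReal_pow]

lemma sq_split (hl : 0 < l) (u v x : E) :
    (2*l)⁻¹ * ‖x‖^2 + (2*l)⁻¹ * ‖u - x‖^2 + (2*l)⁻¹ * ‖v - x‖^2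
      = 3/(2*l) * ‖x - (3:ℝ)⁻¹ • (u + v)‖^2 + (‖u‖^2 - ⟪u,v⟫ + ‖v‖^2)/(3*l) := by
  have h1 := norm_sub_sq_real u x
  have h2 := norm_sub_sq_real v x
  have h3 := norm_sub_sq_real x ((3:ℝ)⁻¹ • (u + v))
  have h4 : ⟪x, (3:ℝ)⁻¹ • (u + v)⟫ = 3⁻¹ * (⟪u, x⟫ + ⟪v, x⟫) := by
    rw [real_inner_smul_right, inner_add_right, real_inner_comm x u, real_inner_comm x v]
  have h5 : ‖(3:ℝ)⁻¹ • (u + v)‖^2 = 9⁻¹ * (‖u‖^2 + 2*⟪u,v⟫ + ‖v‖^2) := by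
    rw [norm_smul, mul_pow, ← norm_add_sq_real]
    norm_num
  rw [h4, h5] at h3
  rw [h1, h2, h3]
  have hl' : l ≠ 0 := ne_of_gt hl
  field_simp
  ring

lemma gauss_conv (hl : 0 < l) (u v : E) :
    ∫ x : E, rexp (-((2*l)⁻¹ * ‖x‖^2)) * rexp (-((2*l)⁻¹ * ‖u - x‖^2))
        * rexp (-((2*l)⁻¹ * ‖v - x‖^2))
      = (π / (3/(2*l))) ^ ((Module.finrank ℝ (EuclideanSpace ℝ (Fin d)) : ℝ) / 2)
        * rexp (-(‖u‖^2 - ⟪u,v⟫ + ‖v‖^2)/(3*l)) := by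
  have hb : (0:ℝ) < 3/(2*l) := by positivity
  have key : ∀ x : E,
      rexp (-((2*l)⁻¹ * ‖x‖^2)) * rexp (-((2*l)⁻¹ * ‖u - x‖^2))
          * rexp (-((2*l)⁻¹ * ‖v - x‖^2))
        = rexp (-(3/(2*l)) * ‖x - (3:ℝ)⁻¹ • (u + v)‖^2)
          * rexp (-(‖u‖^2 - ⟪u,v⟫ + ‖v‖^2)/(3*l)) := by
    intro x
    rw [← Real.exp_add, ← Real.exp_add, ← Real.exp_add]
    congr 1
    have h := sq_split hl u v x
    linear_combination -h
  simp_rw [key]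
  rw [integral_mul_const]
  rw [integral_sub_right_eq_self (μ := volume)
    (fun y : E => rexp (-(3/(2*l)) * ‖y‖^2)) ((3:ℝ)⁻¹ • (u+v))]
  rw [GaussianFourier.integral_rexp_neg_mul_sq_norm hb, mul_comm]

lemma IK (hl : 0 < l) :
    Integrable (fun z : (E × E) × E =>
        rexp (-((2*l)⁻¹ * ‖z.2‖^2)) * rexp (-((2*l)⁻¹ * ‖z.1.1 - z.2‖^2))
          * rexp (-((2*l)⁻¹ * ‖z.1.2 - z.2‖^2)))
      ((volume : Measure (E × E)).prod (volume : Measure E)) := by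
  have h2l : (0:ℝ) < (2*l)⁻¹ := by positivity
  have h6l : (0:ℝ) < (6*l)⁻¹ := by positivity
  have hmeas : AEStronglyMeasurable (fun z : (E × E) × E =>
      rexp (-((2*l)⁻¹ * ‖z.2‖^2)) * rexp (-((2*l)⁻¹ * ‖z.1.1 - z.2‖^2))
        * rexp (-((2*l)⁻¹ * ‖z.1.2 - z.2‖^2)))
      ((volume : Measure (E × E)).prod (volume : Measure E)) := by
    apply Continuous.aestronglyMeasurable
    fun_prop
  rw [integrable_prod_iff hmeas]
  constructor
  · refine Filter.Eventually.of_forall fun p => ?_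
    refine (integrable_gauss h2l).mono'
      (Continuous.aestronglyMeasurable
        (by fun_prop : Continuous fun x : E => rexp (-((2*l)⁻¹ * ‖x‖^2))
          * rexp (-((2*l)⁻¹ * ‖p.1 - x‖^2)) * rexp (-((2*l)⁻¹ * ‖p.2 - x‖^2))))
      (Filter.Eventually.of_forall fun x => ?_)
    show ‖rexp (-((2*l)⁻¹ * ‖x‖^2)) * rexp (-((2*l)⁻¹ * ‖p.1 - x‖^2))
      * rexp (-((2*l)⁻¹ * ‖p.2 - x‖^2))‖ ≤ rexp (-((2*l)⁻¹ * ‖x‖^2))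
    rw [Real.norm_eq_abs, abs_of_nonneg (by positivity)]
    have e1 : rexp (-((2*l)⁻¹ * ‖p.1 - x‖^2)) ≤ 1 := by
      rw [show (1:ℝ) = rexp 0 from (Real.exp_zero).symm]
      exact Real.exp_le_exp.mpr (neg_nonpos.mpr (by positivity))
    have e2 : rexp (-((2*l)⁻¹ * ‖p.2 - x‖^2)) ≤ 1 := by
      rw [show (1:ℝ) = rexp 0 from (Real.exp_zero).symm]
      exact Real.exp_le_exp.mpr (neg_nonpos.mpr (by positivity))
    calc rexp (-((2*l)⁻¹ * ‖x‖^2)) * rexp (-((2*l)⁻¹ * ‖p.1 - x‖^2))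
          * rexp (-((2*l)⁻¹ * ‖p.2 - x‖^2))
        ≤ rexp (-((2*l)⁻¹ * ‖x‖^2)) * 1 * 1 := by gcongr
      _ = rexp (-((2*l)⁻¹ * ‖x‖^2)) := by ring
  · have heq : (fun p : E × E => ∫ x : E, ‖rexp (-((2*l)⁻¹ * ‖x‖^2))
        * rexp (-((2*l)⁻¹ * ‖p.1 - x‖^2)) * rexp (-((2*l)⁻¹ * ‖p.2 - x‖^2))‖)
        = fun p : E × E =>
          (π / (3/(2*l))) ^ ((Module.finrank ℝ (EuclideanSpace ℝ (Fin d)) : ℝ) / 2)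
            * rexp (-(‖p.1‖^2 - ⟪p.1,p.2⟫ + ‖p.2‖^2)/(3*l)) := by
      funext p
      have : ∀ x : E, ‖rexp (-((2*l)⁻¹ * ‖x‖^2)) * rexp (-((2*l)⁻¹ * ‖p.1 - x‖^2))
          * rexp (-((2*l)⁻¹ * ‖p.2 - x‖^2))‖
          = rexp (-((2*l)⁻¹ * ‖x‖^2)) * rexp (-((2*l)⁻¹ * ‖p.1 - x‖^2))
            * rexp (-((2*l)⁻¹ * ‖p.2 - x‖^2)) := fun x => by
        rw [Real.norm_eq_abs, abs_of_nonneg (by positivity)]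
      simp_rw [this]
      exact gauss_conv hl p.1 p.2
    rw [heq]
    apply Integrable.const_mul
    have hg : Integrable (fun p : E × E =>
        rexp (-((6*l)⁻¹ * ‖p.1‖^2)) * rexp (-((6*l)⁻¹ * ‖p.2‖^2))) volume := by
      rw [Measure.volume_eq_prod]
      exact (integrable_gauss h6l).mul_prod (integrable_gauss h6l)
    have hcont : Continuous fun p : E × E =>
        rexp (-(‖p.1‖^2 - ⟪p.1,p.2⟫ + ‖p.2‖^2)/(3*l)) := by
      have h1 : Continuous fun p : E × E => ⟪p.1, p.2⟫ := continuous_inner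
      fun_prop
    refine hg.mono' hcont.aestronglyMeasurable
      (Filter.Eventually.of_forall fun p => ?_)
    rw [Real.norm_eq_abs, abs_of_nonneg (Real.exp_nonneg _), ← Real.exp_add, Real.exp_le_exp]
    have key2 : (‖p.1‖^2 + ‖p.2‖^2)/2 ≤ ‖p.1‖^2 - ⟪p.1,p.2⟫ + ‖p.2‖^2 := by
      nlinarith [real_inner_le_norm p.1 p.2, sq_nonneg (‖p.1‖ - ‖p.2‖)]
    calc -(‖p.1‖^2 - ⟪p.1,p.2⟫ + ‖p.2‖^2)/(3*l)
        ≤ -((‖p.1‖^2 + ‖p.2‖^2)/2)/(3*l) := by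
          exact (div_le_div_iff_of_pos_right (by positivity)).mpr (neg_le_neg key2)
      _ = -((6*l)⁻¹ * ‖p.1‖^2) + -((6*l)⁻¹ * ‖p.2‖^2) := by ring

end S7Aux

open S7Aux

/-- Nonnegativity of the two-point Gaussian correlation: if `ν_λ` is the
centered Gaussian measure on `ℝᵈ × ℝᵈ` with block covariance `λ·[[2I, I],[I, 2I]]`
(density `(2π)^{−d} 3^{−d/2} λ^{−d} exp(−(‖u‖² − ⟨u,v⟩ + ‖v‖²)/(3λ))`), then for every
bounded measurable `φ : ℝ → ℝ` one has `∫ φ(‖u‖)φ(‖v‖) dν_λ(u,v) ≥ 0`. -/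
theorem statement7 (d : ℕ) (hd : 1 ≤ d) (l : ℝ) (hl : 0 < l)
    (φ : ℝ → ℝ) (hφm : Measurable φ) (hφb : ∃ C, ∀ r, |φ r| ≤ C) :
    0 ≤ ∫ p : EuclideanSpace ℝ (Fin d) × EuclideanSpace ℝ (Fin d),
          φ ‖p.1‖ * φ ‖p.2‖
        ∂(volume.withDensity
            (fun p : EuclideanSpace ℝ (Fin d) × EuclideanSpace ℝ (Fin d) =>
              ENNReal.ofReal ((2 * Real.pi) ^ (-(d : ℝ)) * (3 : ℝ) ^ (-(d : ℝ) / 2) *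
                l ^ (-(d : ℝ)) *
                Real.exp (-(‖p.1‖ ^ 2 - ⟪p.1, p.2⟫ + ‖p.2‖ ^ 2) / (3 * l))))) := by
  obtain ⟨C, hC⟩ := hφb
  have hC0 : 0 ≤ C := (abs_nonneg _).trans (hC 0)
  have h2l : (0:ℝ) < (2*l)⁻¹ := by positivity
  set c : ℝ := (2 * Real.pi) ^ (-(d : ℝ)) * (3 : ℝ) ^ (-(d : ℝ) / 2) * l ^ (-(d : ℝ)) with hcdef
  have hc : 0 < c := by
    rw [hcdef]; positivity
  set A : ℝ := (π / (3/(2*l))) ^ ((Module.finrank ℝ (EuclideanSpace ℝ (Fin d)) : ℝ) / 2)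
    with hAdef
  have hA : 0 < A := by
    rw [hAdef]; exact Real.rpow_pos_of_pos (by positivity) _
  have hA0 : A ≠ 0 := ne_of_gt hA
  have hgm : Measurable fun p : EuclideanSpace ℝ (Fin d) × EuclideanSpace ℝ (Fin d) =>
      Real.toNNReal (c * rexp (-(‖p.1‖ ^ 2 - ⟪p.1, p.2⟫ + ‖p.2‖ ^ 2) / (3 * l))) := by
    apply Measurable.real_toNNReal
    apply Continuous.measurable
    have h1 : Continuous fun p : EuclideanSpace ℝ (Fin d) × EuclideanSpace ℝ (Fin d) =>
        ⟪p.1, p.2⟫ := continuous_inner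
    fun_prop
  simp only [ENNReal.ofReal, mul_assoc]
  rw [show (fun p : EuclideanSpace ℝ (Fin d) × EuclideanSpace ℝ (Fin d) =>
      ((c * rexp (-(‖p.1‖ ^ 2 - ⟪p.1, p.2⟫ + ‖p.2‖ ^ 2) / (3 * l))).toNNReal : ℝ≥0∞))
    = fun p => (((fun q : EuclideanSpace ℝ (Fin d) × EuclideanSpace ℝ (Fin d) =>
        Real.toNNReal (c * rexp (-(‖q.1‖ ^ 2 - ⟪q.1, q.2⟫ + ‖q.2‖ ^ 2) / (3 * l)))) p : ℝ≥0)
        : ℝ≥0∞) from rfl]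
  rw [integral_withDensity_eq_integral_smul hgm]
  have hbig : Integrable (Function.uncurry fun
      (p : EuclideanSpace ℝ (Fin d) × EuclideanSpace ℝ (Fin d))
      (x : EuclideanSpace ℝ (Fin d)) =>
      (φ ‖p.1‖ * φ ‖p.2‖) * (rexp (-((2*l)⁻¹ * ‖x‖^2)) * rexp (-((2*l)⁻¹ * ‖p.1 - x‖^2))
        * rexp (-((2*l)⁻¹ * ‖p.2 - x‖^2))))
      ((volume : Measure (EuclideanSpace ℝ (Fin d) × EuclideanSpace ℝ (Fin d))).prod
        (volume : Measure (EuclideanSpace ℝ (Fin d)))) := by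
    simp only [Function.uncurry_def]
    refine ((IK hl).const_mul (C*C)).mono' ?_ ?_
    · apply Measurable.aestronglyMeasurable
      refine Measurable.mul ?_ (Continuous.measurable (by fun_prop))
      exact (hφm.comp measurable_fst.fst.norm).mul (hφm.comp measurable_fst.snd.norm)
    · refine Filter.Eventually.of_forall fun z => ?_
      have hK0 : (0:ℝ) ≤ rexp (-((2*l)⁻¹ * ‖z.2‖^2)) * rexp (-((2*l)⁻¹ * ‖z.1.1 - z.2‖^2))
          * rexp (-((2*l)⁻¹ * ‖z.1.2 - z.2‖^2)) := by positivity
      rw [Real.norm_eq_abs, abs_mul, abs_mul, abs_of_nonneg hK0]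
      exact mul_le_mul (mul_le_mul (hC _) (hC _) (abs_nonneg _) hC0) le_rfl hK0
        (mul_nonneg hC0 hC0)
  have hT : 0 ≤ ∫ p : EuclideanSpace ℝ (Fin d) × EuclideanSpace ℝ (Fin d),
      (∫ x : EuclideanSpace ℝ (Fin d), rexp (-((2*l)⁻¹ * ‖x‖^2))
        * rexp (-((2*l)⁻¹ * ‖p.1 - x‖^2)) * rexp (-((2*l)⁻¹ * ‖p.2 - x‖^2)))
      * (φ ‖p.1‖ * φ ‖p.2‖) := by
    have e3 : ∀ p : EuclideanSpace ℝ (Fin d) × EuclideanSpace ℝ (Fin d),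
        (∫ x : EuclideanSpace ℝ (Fin d), rexp (-((2*l)⁻¹ * ‖x‖^2))
          * rexp (-((2*l)⁻¹ * ‖p.1 - x‖^2)) * rexp (-((2*l)⁻¹ * ‖p.2 - x‖^2)))
          * (φ ‖p.1‖ * φ ‖p.2‖)
        = ∫ x : EuclideanSpace ℝ (Fin d), (φ ‖p.1‖ * φ ‖p.2‖) * (rexp (-((2*l)⁻¹ * ‖x‖^2))
          * rexp (-((2*l)⁻¹ * ‖p.1 - x‖^2)) * rexp (-((2*l)⁻¹ * ‖p.2 - x‖^2))) := by
      intro p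
      rw [integral_const_mul]
      exact mul_comm _ _
    simp only [e3]
    rw [integral_integral_swap hbig]
    have e4 : ∀ x : EuclideanSpace ℝ (Fin d),
        (∫ p : EuclideanSpace ℝ (Fin d) × EuclideanSpace ℝ (Fin d),
          (φ ‖p.1‖ * φ ‖p.2‖) * (rexp (-((2*l)⁻¹ * ‖x‖^2)) * rexp (-((2*l)⁻¹ * ‖p.1 - x‖^2))
            * rexp (-((2*l)⁻¹ * ‖p.2 - x‖^2))))
        = rexp (-((2*l)⁻¹ * ‖x‖^2)) *
          ((∫ u : EuclideanSpace ℝ (Fin d), φ ‖u‖ * rexp (-((2*l)⁻¹ * ‖u - x‖^2))) *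
           (∫ u : EuclideanSpace ℝ (Fin d), φ ‖u‖ * rexp (-((2*l)⁻¹ * ‖u - x‖^2)))) := by
      intro x
      rw [Measure.volume_eq_prod]
      rw [show (fun p : EuclideanSpace ℝ (Fin d) × EuclideanSpace ℝ (Fin d) =>
          (φ ‖p.1‖ * φ ‖p.2‖) * (rexp (-((2*l)⁻¹ * ‖x‖^2)) * rexp (-((2*l)⁻¹ * ‖p.1 - x‖^2))
            * rexp (-((2*l)⁻¹ * ‖p.2 - x‖^2))))
        = fun p : EuclideanSpace ℝ (Fin d) × EuclideanSpace ℝ (Fin d) =>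
          rexp (-((2*l)⁻¹ * ‖x‖^2)) *
            ((fun u : EuclideanSpace ℝ (Fin d) => φ ‖u‖ * rexp (-((2*l)⁻¹ * ‖u - x‖^2))) p.1 *
             (fun u : EuclideanSpace ℝ (Fin d) => φ ‖u‖ * rexp (-((2*l)⁻¹ * ‖u - x‖^2))) p.2)
        from funext fun p => by ring]
      rw [integral_const_mul]
      exact congrArg _ (integral_prod_mul
        (fun u : EuclideanSpace ℝ (Fin d) => φ ‖u‖ * rexp (-((2*l)⁻¹ * ‖u - x‖^2)))
        (fun u : EuclideanSpace ℝ (Fin d) => φ ‖u‖ * rexp (-((2*l)⁻¹ * ‖u - x‖^2))))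
    simp only [e4]
    apply integral_nonneg
    intro x
    exact mul_nonneg (Real.exp_nonneg _) (mul_self_nonneg _)
  have step1 : ∀ p : EuclideanSpace ℝ (Fin d) × EuclideanSpace ℝ (Fin d),
      (c * rexp (-(‖p.1‖ ^ 2 - ⟪p.1, p.2⟫ + ‖p.2‖ ^ 2) / (3 * l))).toNNReal
          • (φ ‖p.1‖ * φ ‖p.2‖)
      = (c/A) * ((∫ x : EuclideanSpace ℝ (Fin d), rexp (-((2*l)⁻¹ * ‖x‖^2))
          * rexp (-((2*l)⁻¹ * ‖p.1 - x‖^2)) * rexp (-((2*l)⁻¹ * ‖p.2 - x‖^2)))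
        * (φ ‖p.1‖ * φ ‖p.2‖)) := by
    intro p
    rw [NNReal.smul_def, smul_eq_mul, Real.coe_toNNReal _ (by positivity),
      gauss_conv hl p.1 p.2, ← hAdef]
    field_simp
  simp only [step1]
  rw [integral_const_mul]
  exact mul_nonneg (le_of_lt (div_pos hc hA)) hT
end
end

section
/- Let T > 0 and A, B ≥ 0. Let u : [0, T] → ℝ be continuous and nonnegative, and let a : [0, T] → ℝ be nonnegative and nondecreasing. Suppose that for every t ∈ [0, T], u(t) ≤ a(t) + A·∫₀ᵗ u(s) ds + B·∫₀ᵗ (∫₀ᵖ u(s) ds) dp. Then for every t ∈ [0, T], u(t) ≤ a(T) · (1 + (A + B·T)·T·exp((A + B·T)·T)). -/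
open Set intervalIntegral Real

/-- `exp x ≤ 1 + x * exp x` for all real `x`. -/
lemma aux_exp_le (x : ℝ) : Real.exp x ≤ 1 + x * Real.exp x := by
  have h := Real.add_one_le_exp (-x)
  have hx : 0 < Real.exp x := Real.exp_pos x
  have h2 : (1 - x) * Real.exp x ≤ Real.exp (-x) * Real.exp x := by nlinarith
  rw [← Real.exp_add, neg_add_cancel, Real.exp_zero] at h2
  nlinarith

/-- Grönwall-type inequality with an iterated (double-integral) memory
term: if `u ≤ a(t) + A∫₀ᵗ u + B∫₀ᵗ∫₀ᵖ u` on `[0, T]` with `u` continuous nonnegative and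
`a` nonnegative nondecreasing, then `u(t) ≤ a(T)(1 + (A + BT)T·exp((A + BT)T))` on `[0,T]`. -/
theorem statement11 (T A B : ℝ) (hT : 0 < T) (hA : 0 ≤ A) (hB : 0 ≤ B)
    (u a : ℝ → ℝ)
    (hu_cont : ContinuousOn u (Set.Icc 0 T))
    (hu_nonneg : ∀ t ∈ Set.Icc (0 : ℝ) T, 0 ≤ u t)
    (ha_nonneg : ∀ t ∈ Set.Icc (0 : ℝ) T, 0 ≤ a t)
    (ha_mono : ∀ s ∈ Set.Icc (0 : ℝ) T, ∀ t ∈ Set.Icc (0 : ℝ) T, s ≤ t → a s ≤ a t)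
    (hineq : ∀ t ∈ Set.Icc (0 : ℝ) T,
      u t ≤ a t + A * (∫ s in (0 : ℝ)..t, u s)
            + B * (∫ p in (0 : ℝ)..t, ∫ s in (0 : ℝ)..p, u s)) :
    ∀ t ∈ Set.Icc (0 : ℝ) T,
      u t ≤ a T * (1 + (A + B * T) * T * Real.exp ((A + B * T) * T)) := by
  -- clamp projection onto [0, T]
  set pr : ℝ → ℝ := fun s => max 0 (min s T) with hpr
  have hpr_mem : ∀ s, pr s ∈ Set.Icc (0 : ℝ) T := fun s =>
    ⟨le_max_left _ _, max_le (le_of_lt hT) (min_le_right _ _)⟩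
  have hpr_cont : Continuous pr := continuous_const.max (continuous_id.min continuous_const)
  have hpr_eq : ∀ s ∈ Set.Icc (0 : ℝ) T, pr s = s := by
    intro s hs
    simp only [hpr, min_eq_left hs.2, max_eq_right hs.1]
  -- the continuous extension of u
  set uc : ℝ → ℝ := fun s => u (pr s) with huc
  have huc_cont : Continuous uc := hu_cont.comp_continuous hpr_cont hpr_mem
  have huc_eq : ∀ s ∈ Set.Icc (0 : ℝ) T, uc s = u s := fun s hs => by
    simp only [huc, hpr_eq s hs]
  have huc_nonneg : ∀ s, 0 ≤ uc s := fun s => hu_nonneg _ (hpr_mem s)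
  -- its primitive
  set v : ℝ → ℝ := fun t => ∫ s in (0 : ℝ)..t, uc s with hv
  have hv_nonneg : ∀ t, 0 ≤ t → 0 ≤ v t := by
    intro t ht
    exact intervalIntegral.integral_nonneg ht fun s _ => huc_nonneg s
  have hv_mono : ∀ p t : ℝ, 0 ≤ p → p ≤ t → v p ≤ v t := by
    intro p t hp hpt
    apply intervalIntegral.integral_mono_interval le_rfl hp hpt
    · exact Filter.Eventually.of_forall fun s => huc_nonneg s
    · exact (huc_cont.intervalIntegrable _ _)
  have hv_deriv : ∀ x : ℝ, HasDerivAt v (uc x) x := by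
    intro x
    exact intervalIntegral.integral_hasDerivAt_right (huc_cont.intervalIntegrable _ _)
      (huc_cont.stronglyMeasurableAtFilter _ _) huc_cont.continuousAt
  have hv_cont : Continuous v := by
    have : Differentiable ℝ v := fun x => (hv_deriv x).differentiableAt
    exact this.continuous
  -- the integral of u on [0,t] agrees with v t for t ∈ [0,T]
  have hint_eq : ∀ t ∈ Set.Icc (0 : ℝ) T, (∫ s in (0 : ℝ)..t, u s) = v t := by
    intro t ht
    apply intervalIntegral.integral_congr
    intro s hs
    rw [Set.uIcc_of_le ht.1] at hs
    exact (huc_eq s ⟨hs.1, hs.2.trans ht.2⟩).symm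
  set C : ℝ := A + B * T with hC
  have hC0 : 0 ≤ C := by positivity
  have haT : 0 ≤ a T := ha_nonneg T ⟨le_of_lt hT, le_rfl⟩
  -- key bound:  uc x ≤ a T + C * v x  on [0,T]
  have key : ∀ x ∈ Set.Icc (0 : ℝ) T, uc x ≤ a T + C * v x := by
    intro x hx
    have h1 := hineq x hx
    have h2 : (∫ s in (0 : ℝ)..x, u s) = v x := hint_eq x hx
    -- double integral bound
    have h3 : (∫ p in (0 : ℝ)..x, ∫ s in (0 : ℝ)..p, u s) ≤ T * v x := by
      have hcong : (∫ p in (0 : ℝ)..x, ∫ s in (0 : ℝ)..p, u s) = ∫ p in (0 : ℝ)..x, v p := by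
        apply intervalIntegral.integral_congr
        intro p hp
        rw [Set.uIcc_of_le hx.1] at hp
        exact hint_eq p ⟨hp.1, hp.2.trans hx.2⟩
      rw [hcong]
      have hmono : (∫ p in (0 : ℝ)..x, v p) ≤ ∫ _ in (0 : ℝ)..x, v x := by
        apply intervalIntegral.integral_mono_on hx.1
        · exact (hv_cont.intervalIntegrable _ _)
        · exact intervalIntegrable_const
        · intro p hp
          exact hv_mono p x hp.1 hp.2
      have : (∫ _ in (0 : ℝ)..x, v x) = x * v x := by simp
      rw [this] at hmono
      refine hmono.trans ?_
      have := hv_nonneg x hx.1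
      nlinarith [hx.2]
    have ha' : a x ≤ a T := ha_mono x hx T ⟨le_of_lt hT, le_rfl⟩ hx.2
    have hvx := hv_nonneg x hx.1
    rw [huc_eq x hx]
    calc u x ≤ a x + A * (∫ s in (0 : ℝ)..x, u s)
            + B * (∫ p in (0 : ℝ)..x, ∫ s in (0 : ℝ)..p, u s) := h1
      _ ≤ a T + A * v x + B * (T * v x) := by
          rw [h2]
          have := mul_le_mul_of_nonneg_left h3 hB
          linarith
      _ = a T + C * v x := by ring
  -- Grönwall for v
  have gron : ∀ x ∈ Set.Icc (0 : ℝ) T, ‖v x‖ ≤ gronwallBound 0 C (a T) (x - 0) := by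
    apply norm_le_gronwallBound_of_norm_deriv_right_le (f' := uc)
    · exact hv_cont.continuousOn
    · exact fun x _ => (hv_deriv x).hasDerivWithinAt
    · simp [hv]
    · intro x hx
      have h := key x ⟨hx.1, le_of_lt hx.2⟩
      rw [Real.norm_of_nonneg (huc_nonneg x), Real.norm_of_nonneg (hv_nonneg x hx.1)]
      linarith
  -- conclude
  intro t ht
  have hvt : v t ≤ gronwallBound 0 C (a T) t := by
    have := gron t ht
    rwa [sub_zero, Real.norm_of_nonneg (hv_nonneg t ht.1)] at this
  have hfinal : C * gronwallBound 0 C (a T) t ≤ a T * (C * T * Real.exp (C * T)) := by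
    rcases eq_or_lt_of_le hC0 with hC0' | hCpos
    · rw [← hC0']
      simp
    · rw [gronwallBound_of_K_ne_0 (ne_of_gt hCpos)]
      have h1 : Real.exp (C * t) ≤ Real.exp (C * T) :=
        Real.exp_le_exp.2 (mul_le_mul_of_nonneg_left ht.2 hC0)
      have h2 : Real.exp (C * T) ≤ 1 + (C * T) * Real.exp (C * T) := aux_exp_le (C * T)
      have hCne : C ≠ 0 := ne_of_gt hCpos
      have : C * (0 * Real.exp (C * t) + a T / C * (Real.exp (C * t) - 1))
          = a T * (Real.exp (C * t) - 1) := by field_simp; ring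
      rw [this]
      have h3 : Real.exp (C * t) - 1 ≤ C * T * Real.exp (C * T) := by linarith
      exact mul_le_mul_of_nonneg_left h3 haT
  have hu := key t ht
  rw [huc_eq t ht] at hu
  have : u t ≤ a T + C * gronwallBound 0 C (a T) t := by
    have := mul_le_mul_of_nonneg_left hvt hC0
    linarith
  calc u t ≤ a T + C * gronwallBound 0 C (a T) t := this
    _ ≤ a T + a T * (C * T * Real.exp (C * T)) := by linarith
    _ = a T * (1 + (A + B * T) * T * Real.exp ((A + B * T) * T)) := by rw [← hC]; ring
end
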